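/- In a finite tree $F$ with more than $k+1$ vertices, call an edge $e$ red if both connected components of $F - e$ have more than $k$ vertices. Then the set of red edges, if nonempty, spans a connected subgraph of $F$ (i.e., the red edges form a subtree). -/

import Mathlib

open SimpleGraph

/-- An edge `e` of the tree `F` is *red* (with parameter `k`) if it is an edge of `F` and both
connected components of `F - e` (namely the components containing the two endpoints of `e`)
have more than `k` vertices. -/
def redEdge {V : Type*} (F : SimpleGraph V) (k : ℕ) (e : Sym2 V) : Prop :=
  e ∈ F.edgeSet ∧ ∀ w ∈ e, k < (((F.deleteEdges {e}).connectedComponentMk w).supp).ncard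

/-- If `c` is an endpoint of `g` lying outside the component of `a` in `F - f`, then the
component of `a` in `F - f` is contained in the component of `a` in `F - g`. -/
private lemma supp_subset_aux {V : Type*} (F : SimpleGraph V) (f g : Sym2 V) (a c : V)
    (hcg : c ∈ g) (hc : ¬ (F.deleteEdges {f}).Reachable a c) :
    (((F.deleteEdges {f}).connectedComponentMk a).supp) ⊆
      (((F.deleteEdges {g}).connectedComponentMk a).supp) := by
  classical
  intro v hv
  rw [ConnectedComponent.mem_supp_iff, ConnectedComponent.eq] at hv ⊢
  obtain ⟨p⟩ := hv
  obtain ⟨d, rfl⟩ := Sym2.mem_iff_exists.mp hcg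
  have hgp : s(c, d) ∉ p.edges := by
    intro hmem
    have hcsup : c ∈ p.support := p.fst_mem_support_of_mem_edges hmem
    exact hc ((Reachable.symm ⟨p⟩).trans (p.takeUntil c hcsup).reachable)
  refine ⟨(p.transfer (F.deleteEdges {s(c, d)}) ?_)⟩
  intro e he
  have heF : e ∈ F.edgeSet := by
    have := p.edges_subset_edgeSet he
    rw [edgeSet_deleteEdges] at this
    exact this.1
  rw [edgeSet_deleteEdges]
  exact ⟨heF, by rintro rfl; exact hgp he⟩

/-- Key lemma: if `w` is connected in `F - g` to an endpoint of a red edge `f`, then the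
component of `w` in `F - g` has more than `k` vertices. -/
private lemma lemA {V : Type*} [Fintype V] {F : SimpleGraph V} (hF : F.IsTree) {k : ℕ}
    {f : Sym2 V} (hf : redEdge F k f) {g : Sym2 V} {x w : V} (hx : x ∈ f)
    (hr : (F.deleteEdges {g}).Reachable w x) :
    k < (((F.deleteEdges {g}).connectedComponentMk w).supp).ncard := by
  rw [ConnectedComponent.sound hr]
  by_cases hfg : f = g
  · subst hfg; exact hf.2 x hx
  obtain ⟨y, rfl⟩ := Sym2.mem_iff_exists.mp hx
  have hadjF : F.Adj x y := hf.1
  -- every edge of a tree is a bridge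
  have hbridge : ¬ (F.deleteEdges {s(x, y)}).Reachable x y := by
    have := (isAcyclic_iff_forall_edge_isBridge.mp hF.IsAcyclic) hf.1
    rw [isBridge_iff] at this
    exact this
  -- pick an endpoint of `g`
  obtain ⟨c, d, rfl⟩ : ∃ c d, g = s(c, d) := Sym2.ind (fun c d => ⟨c, d, rfl⟩) g
  have hadjG : (F.deleteEdges {s(c, d)}).Adj x y := by
    rw [deleteEdges_adj]
    exact ⟨hadjF, by simpa [eq_comm] using hfg⟩
  by_cases hc : (F.deleteEdges {s(x, y)}).Reachable x c
  · -- then `c` is not reachable from `y` in `F - f`; use the `y`-side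
    have hyc : ¬ (F.deleteEdges {s(x, y)}).Reachable y c := fun h => hbridge (hc.trans h.symm)
    have hsub := supp_subset_aux F s(x, y) s(c, d) y c (by simp) hyc
    have hy : k < (((F.deleteEdges {s(x, y)}).connectedComponentMk y).supp).ncard :=
      hf.2 y (by simp)
    have := Set.ncard_le_ncard hsub (Set.toFinite _)
    have heq : (F.deleteEdges {s(c, d)}).connectedComponentMk x
        = (F.deleteEdges {s(c, d)}).connectedComponentMk y :=
      ConnectedComponent.sound hadjG.reachable
    rw [heq]
    omega
  · have hsub := supp_subset_aux F s(x, y) s(c, d) x c (by simp) hc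
    have hy : k < (((F.deleteEdges {s(x, y)}).connectedComponentMk x).supp).ncard :=
      hf.2 x (by simp)
    have := Set.ncard_le_ncard hsub (Set.toFinite _)
    omega

/-- In a finite tree `F` with more than `k+1` vertices, if the set of red
edges is nonempty, then the red edges span a connected subgraph of `F`: the subgraph of `F`
consisting precisely of the red edges, induced on the set of vertices incident to some red
edge, is connected. -/
theorem red_edges_connected {V : Type*} [Fintype V] (F : SimpleGraph V) (hF : F.IsTree)
    (k : ℕ) (hk : 1 ≤ k) (hcard : k + 1 < Fintype.card V)
    (hne : ∃ e, redEdge F k e) :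
    ((F.deleteEdges {e | ¬ redEdge F k e}).induce
      (F.deleteEdges {e | ¬ redEdge F k e}).support).Connected := by
  classical
  set G := F.deleteEdges {e | ¬ redEdge F k e} with hG
  have hGadj : ∀ a b : V, G.Adj a b ↔ F.Adj a b ∧ redEdge F k s(a, b) := by
    intro a b
    rw [hG, deleteEdges_adj]
    simp
  -- core reachability lemma in G
  have key : ∀ (x y : V) (p : F.Walk x y), p.IsPath → (∃ e, redEdge F k e ∧ x ∈ e) →
      (∃ e, redEdge F k e ∧ y ∈ e) → G.Reachable x y := by
    intro x y p
    induction p with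
    | nil => exact fun _ _ _ => Reachable.refl _
    | @cons u v w h q ih =>
      intro hp hx hy
      obtain ⟨e1, he1, hx1⟩ := hx
      obtain ⟨e2, he2, hy2⟩ := hy
      have hq : q.IsPath := hp.of_cons
      have hu : u ∉ q.support := ((Walk.cons_isPath_iff h q).mp hp).2
      have hred : redEdge F k s(u, v) := by
        refine ⟨h, ?_⟩
        intro z hz
        rw [Sym2.mem_iff] at hz
        rcases hz with rfl | rfl
        · exact lemA hF he1 hx1 (Reachable.refl _)
        · -- transfer q to F - s(u,z)
          have hqe : ∀ e ∈ q.edges, e ∈ (F.deleteEdges {s(u, z)}).edgeSet := by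
            intro e he
            rw [edgeSet_deleteEdges]
            refine ⟨q.edges_subset_edgeSet he, ?_⟩
            rintro rfl
            exact hu (q.fst_mem_support_of_mem_edges he)
          have hr : (F.deleteEdges {s(u, z)}).Reachable z w :=
            ⟨q.transfer (F.deleteEdges {s(u, z)}) hqe⟩
          exact lemA hF he2 hy2 hr
      have hadj : G.Adj u v := (hGadj u v).mpr ⟨h, hred⟩
      exact hadj.reachable.trans (ih hq ⟨s(u, v), hred, by simp⟩ ⟨e2, he2, hy2⟩)
  -- lift reachability in G to the induced graph on the support
  have lift : ∀ (u v : V) (p : G.Walk u v) (hu : u ∈ G.support) (hv : v ∈ G.support),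
      (G.induce G.support).Reachable ⟨u, hu⟩ ⟨v, hv⟩ := by
    intro u v p
    induction p with
    | nil =>
      intro hu hv
      exact Reachable.refl _
    | @cons a b c h q ih =>
      intro hu hv
      have hb : b ∈ G.support := ⟨a, h.symm⟩
      have hadj : (G.induce G.support).Adj ⟨a, hu⟩ ⟨b, hb⟩ := h
      exact hadj.reachable.trans (ih hb hv)
  rw [connected_iff]
  refine ⟨?_, ?_⟩
  · rintro ⟨u, hu⟩ ⟨v, hv⟩
    obtain ⟨u', hu'⟩ := hu
    obtain ⟨v', hv'⟩ := hv
    have hru' : redEdge F k s(u, u') := ((hGadj u u').mp hu').2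
    have hrv' : redEdge F k s(v, v') := ((hGadj v v').mp hv').2
    obtain ⟨p⟩ := hF.isConnected u v
    have hreach : G.Reachable u v :=
      key u v p.toPath p.toPath.2 ⟨s(u, u'), hru', by simp⟩ ⟨s(v, v'), hrv', by simp⟩
    obtain ⟨q⟩ := hreach
    exact lift u v q ⟨u', hu'⟩ ⟨v', hv'⟩
  · obtain ⟨e0, he0⟩ := hne
    obtain ⟨a, b, rfl⟩ : ∃ a b, e0 = s(a, b) := Sym2.ind (fun a b => ⟨a, b, rfl⟩) e0
    have : G.Adj a b := (hGadj a b).mpr ⟨he0.1, he0⟩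
    exact ⟨⟨a, ⟨b, this⟩⟩⟩
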